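/- (The p = 2 case.) Let N and M be positive integers with N dividing M, and let H be a subgroup of SL(2,ℤ) satisfying Γ(M) ≤ H ≤ Γ(N), [Γ(N) : H] = 2, and H ≠ Γ(N). Then for every positive integer L, Γ(L) ≤ H if and only if 2·N divides L. In particular the square root of a level-N modular unit that has some level M (with N | M) but is not itself of level N has level exactly 2N. -/

import Mathlib

open Matrix MatrixGroups CongruenceSubgroup

namespace GammaTwoAux

abbrev SL2Z := Matrix.SpecialLinearGroup (Fin 2) ℤ

/-! ### Three one-parameter families of unipotent elements of `SL(2, ℤ)` -/

def E12 (m : ℤ) : SL2Z := ⟨!![1, m; 0, 1], by simp [Matrix.det_fin_two_of]⟩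
def E21 (m : ℤ) : SL2Z := ⟨!![1, 0; m, 1], by simp [Matrix.det_fin_two_of]⟩
def EC (m : ℤ) : SL2Z := ⟨!![1 + m, -m; m, 1 - m], by simp [Matrix.det_fin_two_of]; ring⟩

lemma E12_mul (m n : ℤ) : E12 m * E12 n = E12 (m + n) := by
  ext i j; rw [Matrix.SpecialLinearGroup.coe_mul]; fin_cases i <;> fin_cases j <;> simp [E12, Matrix.mul_fin_two] <;> ring
lemma E21_mul (m n : ℤ) : E21 m * E21 n = E21 (m + n) := by
  ext i j; rw [Matrix.SpecialLinearGroup.coe_mul]; fin_cases i <;> fin_cases j <;> simp [E21, Matrix.mul_fin_two]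
lemma EC_mul (m n : ℤ) : EC m * EC n = EC (m + n) := by
  ext i j; rw [Matrix.SpecialLinearGroup.coe_mul]; fin_cases i <;> fin_cases j <;> simp [EC, Matrix.mul_fin_two] <;> ring

lemma E12_pow (m : ℤ) (k : ℕ) : E12 m ^ k = E12 (k * m) := by
  induction k with
  | zero => ext i j; rw [pow_zero]; fin_cases i <;> fin_cases j <;> simp [E12]
  | succ n ih => rw [pow_succ, ih, E12_mul]; congr 1; push_cast; ring
lemma E21_pow (m : ℤ) (k : ℕ) : E21 m ^ k = E21 (k * m) := by
  induction k with
  | zero => ext i j; rw [pow_zero]; fin_cases i <;> fin_cases j <;> simp [E21]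
  | succ n ih => rw [pow_succ, ih, E21_mul]; congr 1; push_cast; ring
lemma EC_pow (m : ℤ) (k : ℕ) : EC m ^ k = EC (k * m) := by
  induction k with
  | zero => ext i j; rw [pow_zero]; fin_cases i <;> fin_cases j <;> simp [EC]
  | succ n ih => rw [pow_succ, ih, EC_mul]; congr 1; push_cast; ring

lemma intCast_zmod_eq_zero {P : ℕ} {m : ℤ} (h : (P : ℤ) ∣ m) : (m : ZMod P) = 0 :=
  (ZMod.intCast_zmod_eq_zero_iff_dvd m P).2 h

lemma E12_mem_Gamma {P : ℕ} {m : ℤ} (h : (P : ℤ) ∣ m) : E12 m ∈ Gamma P := by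
  rw [Gamma_mem]
  refine ⟨by simp [E12], ?_, by simp [E12], by simp [E12]⟩
  show ((E12 m : Matrix (Fin 2) (Fin 2) ℤ) 0 1 : ZMod P) = 0
  simp [E12, intCast_zmod_eq_zero h]

lemma E21_mem_Gamma {P : ℕ} {m : ℤ} (h : (P : ℤ) ∣ m) : E21 m ∈ Gamma P := by
  rw [Gamma_mem]
  refine ⟨by simp [E21], by simp [E21], ?_, by simp [E21]⟩
  show ((E21 m : Matrix (Fin 2) (Fin 2) ℤ) 1 0 : ZMod P) = 0
  simp [E21, intCast_zmod_eq_zero h]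

lemma EC_mem_Gamma {P : ℕ} {m : ℤ} (h : (P : ℤ) ∣ m) : EC m ∈ Gamma P := by
  rw [Gamma_mem]
  have h0 : (m : ZMod P) = 0 := intCast_zmod_eq_zero h
  constructor
  · show ((EC m : Matrix (Fin 2) (Fin 2) ℤ) 0 0 : ZMod P) = 1
    simp [EC]; push_cast; simp [h0]
  constructor
  · show ((EC m : Matrix (Fin 2) (Fin 2) ℤ) 0 1 : ZMod P) = 0
    simp [EC]; push_cast; simp [h0]
  constructor
  · show ((EC m : Matrix (Fin 2) (Fin 2) ℤ) 1 0 : ZMod P) = 0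
    simp [EC, h0]
  · show ((EC m : Matrix (Fin 2) (Fin 2) ℤ) 1 1 : ZMod P) = 1
    simp [EC]; push_cast; simp [h0]

/-! ### Casting `SL(2, ℤ)` matrices to `ZMod Q` -/

lemma coe_cast (Q : ℕ) (x : SL2Z) :
    ((x : Matrix.SpecialLinearGroup (Fin 2) (ZMod Q)) : Matrix (Fin 2) (Fin 2) (ZMod Q)) =
      !![((x 0 0 : ℤ) : ZMod Q), ((x 0 1 : ℤ) : ZMod Q);
         ((x 1 0 : ℤ) : ZMod Q), ((x 1 1 : ℤ) : ZMod Q)] := by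
  ext i j
  fin_cases i <;> fin_cases j <;>
    simp [Matrix.SpecialLinearGroup.coe_matrix_coe]

lemma E12_cast (Q : ℕ) (m : ℤ) :
    ((E12 m : Matrix.SpecialLinearGroup (Fin 2) (ZMod Q)) : Matrix (Fin 2) (Fin 2) (ZMod Q)) =
      !![1, (m : ZMod Q); 0, 1] := by
  rw [coe_cast]; simp [E12]

lemma E21_cast (Q : ℕ) (m : ℤ) :
    ((E21 m : Matrix.SpecialLinearGroup (Fin 2) (ZMod Q)) : Matrix (Fin 2) (Fin 2) (ZMod Q)) =
      !![1, 0; (m : ZMod Q), 1] := by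
  rw [coe_cast]; simp [E21]

lemma EC_cast (Q : ℕ) (m : ℤ) :
    ((EC m : Matrix.SpecialLinearGroup (Fin 2) (ZMod Q)) : Matrix (Fin 2) (Fin 2) (ZMod Q)) =
      !![1 + (m : ZMod Q), -(m : ZMod Q); (m : ZMod Q), 1 - (m : ZMod Q)] := by
  rw [coe_cast]; simp [EC]

/-! ### An elementary "stable range" lemma for `ℤ` -/

lemma exists_coprime_add (a c : ℤ) (h : IsCoprime a c) (Q : ℕ) (hQ : Q ≠ 0) :
    ∃ t : ℤ, IsCoprime (a + c * t) (Q : ℤ) := by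
  classical
  set s : Finset ℕ := Q.primeFactors.filter (fun p => ¬ ((p : ℤ) ∣ a)) with hs
  set T : ℕ := ∏ p ∈ s, p with hT
  refine ⟨(T : ℤ), ?_⟩
  rw [Int.isCoprime_iff_gcd_eq_one]
  by_contra hg
  obtain ⟨p, hp, hpg⟩ := Nat.exists_prime_and_dvd hg
  have hdvd1 : (p : ℤ) ∣ a + c * T :=
    (Int.natCast_dvd_natCast.2 hpg).trans (Int.gcd_dvd_left _ _)
  have hdvd2 : (p : ℤ) ∣ (Q : ℤ) :=
    (Int.natCast_dvd_natCast.2 hpg).trans (Int.gcd_dvd_right _ _)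
  have hpQ : p ∣ Q := Int.natCast_dvd_natCast.1 hdvd2
  by_cases hpa : (p : ℤ) ∣ a
  · have hpc : ¬ (p : ℤ) ∣ c := by
      intro hc
      obtain ⟨x, y, hxy⟩ := h
      have h1 : (p : ℤ) ∣ 1 := hxy ▸ dvd_add (Dvd.dvd.mul_left hpa x) (Dvd.dvd.mul_left hc y)
      exact hp.ne_one (Nat.dvd_one.1 (Int.natCast_dvd_natCast.1 (by exact_mod_cast h1)))
    have hpT : ¬ (p : ℤ) ∣ (T : ℤ) := by
      rw [Int.natCast_dvd_natCast]
      intro hdT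
      obtain ⟨q, hq, hpq⟩ := (hp.prime.dvd_finset_prod_iff _).1 (hT ▸ hdT)
      have hqprime : q.Prime := Nat.prime_of_mem_primeFactors (Finset.mem_filter.1 hq).1
      exact (Finset.mem_filter.1 hq).2 (((Nat.prime_dvd_prime_iff_eq hp hqprime).1 hpq) ▸ hpa)
    have hct : (p : ℤ) ∣ c * T := (dvd_add_right hpa).1 hdvd1
    rcases (Int.Prime.dvd_mul' (by exact_mod_cast hp) hct) with h1 | h1
    · exact hpc h1
    · exact hpT h1
  · have hps : p ∈ s := Finset.mem_filter.2 ⟨Nat.mem_primeFactors.2 ⟨hp, hpQ, hQ⟩, hpa⟩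
    have hpT : (p : ℤ) ∣ (T : ℤ) := Int.natCast_dvd_natCast.2 (hT ▸ Finset.dvd_prod_of_mem id hps)
    exact hpa (by simpa using hdvd1.sub (hpT.mul_left c))

/-! ### The key matrix factorization -/

lemma key_matrix {R : Type*} [CommRing R] (a b c d t v : R)
    (h1 : v * (a + t * c) = 1) (h2 : a * d - b * c = 1) :
    !![a, b; c, d] =
      !![1, -t; 0, 1] * (!![1, 0; c * v, 1] *
        ((!![1, a + t * c - 1; 0, 1] *
          (!![1 + v * (a + t * c - 1), -(v * (a + t * c - 1));
              v * (a + t * c - 1), 1 - v * (a + t * c - 1)] *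
           !![1, 0; -(a + t * c - 1), 1])) *
         !![1, v * (b + t * d); 0, 1])) := by
  set u : R := a + t * c with hu
  set s : R := u - 1 with hsdef
  set b' : R := b + t * d with hb'
  have step1 : !![(1:R), s; 0, 1] * (!![1 + v * s, -(v * s); v * s, 1 - v * s] *
      !![1, 0; -s, 1]) = !![u, 0; 0, v] := by
    ext i j
    fin_cases i <;> fin_cases j <;> simp [Matrix.mul_fin_two] <;>
      first
        | linear_combination (s * u) * h1
        | linear_combination (-s) * h1
        | linear_combination s * h1
        | linear_combination (-(1:R)) * h1
        | linear_combination h1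
        | ring
  have step2 : !![u, (0:R); 0, v] * !![1, v * b'; 0, 1] = !![u, b'; 0, v] := by
    ext i j
    fin_cases i <;> fin_cases j <;> simp [Matrix.mul_fin_two] <;>
      first
        | linear_combination b' * h1
        | linear_combination (-b') * h1
        | ring
  have step3 : !![(1:R), 0; c * v, 1] * !![u, b'; 0, v] = !![u, b'; c, d] := by
    ext i j
    fin_cases i <;> fin_cases j <;> simp [Matrix.mul_fin_two] <;>
      first
        | linear_combination c * h1
        | linear_combination d * h1 - v * h2
        | linear_combination (-d) * h1 + v * h2
        | linear_combination v * h2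
        | ring
  have step4 : !![(1:R), -t; 0, 1] * !![u, b'; c, d] = !![a, b; c, d] := by
    ext i j
    fin_cases i <;> fin_cases j <;> simp [Matrix.mul_fin_two] <;> ring
  calc !![a,b;c,d] = !![(1:R), -t; 0, 1] * !![u, b'; c, d] := step4.symm
    _ = !![(1:R), -t; 0, 1] * (!![1, 0; c * v, 1] * !![u, b'; 0, v]) := by rw [step3]
    _ = _ := by rw [← step2, ← step1]

local notation "SLMOD(" N ")" =>
  @Matrix.SpecialLinearGroup.map (Fin 2) _ _ _ _ _ _ (Int.castRingHom (ZMod N))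

/-! ### The master decomposition lemma -/

lemma master {P Q : ℕ} (hQ : Q ≠ 0) {g : SL2Z} (hg : g ∈ Gamma P) :
    ∃ (m₁ m₂ m₃ m₄ m₅ m₆ : ℤ) (γ : SL2Z),
      (P:ℤ) ∣ m₁ ∧ (P:ℤ) ∣ m₂ ∧ (P:ℤ) ∣ m₃ ∧ (P:ℤ) ∣ m₄ ∧ (P:ℤ) ∣ m₅ ∧ (P:ℤ) ∣ m₆ ∧
      γ ∈ Gamma Q ∧
      g = E12 m₁ * (E21 m₂ * (E12 m₃ * (EC m₄ * (E21 m₅ * (E12 m₆ * γ))))) := by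
  set a : ℤ := g 0 0 with ha
  set b : ℤ := g 0 1 with hb
  set c : ℤ := g 1 0 with hc
  set d : ℤ := g 1 1 with hd
  have hdet : a * d - b * c = 1 := by
    have := g.prop
    rw [Matrix.det_fin_two] at this
    exact this
  rw [Gamma_mem] at hg
  have hPa : (P:ℤ) ∣ a - 1 := by
    refine (ZMod.intCast_zmod_eq_zero_iff_dvd _ P).1 ?_
    push_cast
    rw [hg.1]; ring
  have hPb : (P:ℤ) ∣ b := (ZMod.intCast_zmod_eq_zero_iff_dvd _ P).1 hg.2.1
  have hPc : (P:ℤ) ∣ c := (ZMod.intCast_zmod_eq_zero_iff_dvd _ P).1 hg.2.2.1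
  have hac : IsCoprime a c := ⟨d, -b, by linear_combination hdet⟩
  obtain ⟨k, hk⟩ := hPa
  have hPa' : (P:ℤ) ∣ a - 1 := ⟨k, hk⟩
  have haP : IsCoprime a (P:ℤ) := ⟨1, -k, by linear_combination hk⟩
  obtain ⟨t₀, ht₀⟩ := exists_coprime_add a (c * (P:ℤ)) (hac.mul_right haP) Q hQ
  set t : ℤ := (P:ℤ) * t₀ with ht
  set u : ℤ := a + t * c with hu
  have hucop : IsCoprime u (Q:ℤ) := by
    have heq : a + c * (P:ℤ) * t₀ = u := by rw [hu, ht]; ring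
    rwa [heq] at ht₀
  obtain ⟨v, y, hvy⟩ := hucop
  set s : ℤ := u - 1 with hs
  set b' : ℤ := b + t * d with hb'
  have hPt : (P:ℤ) ∣ t := Dvd.intro t₀ rfl
  have hPs : (P:ℤ) ∣ s := by
    have h1 : s = (a - 1) + t * c := by rw [hs, hu]; ring
    rw [h1]
    exact hPa'.add (hPt.mul_right c)
  have hPb' : (P:ℤ) ∣ b' := hPb.add (hPt.mul_right d)
  set w : SL2Z := E12 (-t) * (E21 (c * v) * (E12 s * (EC (v * s) * (E21 (-s) * E12 (v * b'))))) with hw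
  refine ⟨-t, c * v, s, v * s, -s, v * b', w⁻¹ * g,
    dvd_neg.2 hPt, hPc.mul_right v, hPs, hPs.mul_left v, dvd_neg.2 hPs, hPb'.mul_left v, ?_, ?_⟩
  · rw [Gamma_mem']
    rw [_root_.map_mul, _root_.map_inv]
    have hmat : ((SLMOD(Q) g : Matrix.SpecialLinearGroup (Fin 2) (ZMod Q)) :
        Matrix (Fin 2) (Fin 2) (ZMod Q)) = ((SLMOD(Q) w : Matrix.SpecialLinearGroup (Fin 2) (ZMod Q)) :
        Matrix (Fin 2) (Fin 2) (ZMod Q)) := by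
      have hcoeg := coe_cast Q g
      rw [hcoeg, hw]
      simp only [_root_.map_mul, Matrix.SpecialLinearGroup.coe_mul, E12_cast, E21_cast, EC_cast]
      have h1 : ((v:ℤ) : ZMod Q) * (((a:ℤ) : ZMod Q) + ((t:ℤ) : ZMod Q) * ((c:ℤ) : ZMod Q)) = 1 := by
        have h1' := congrArg (fun z : ℤ => (z : ZMod Q)) hvy
        push_cast at h1'
        rw [ZMod.natCast_self] at h1'
        simp only [mul_zero, add_zero] at h1'
        rw [hu] at h1'
        push_cast at h1'
        linear_combination h1'
      have h2 : ((a:ℤ) : ZMod Q) * ((d:ℤ) : ZMod Q) - ((b:ℤ) : ZMod Q) * ((c:ℤ) : ZMod Q) = 1 := by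
        have h2' := congrArg (fun z : ℤ => (z : ZMod Q)) hdet
        push_cast at h2'
        linear_combination h2'
      have hkm := key_matrix ((a:ℤ) : ZMod Q) ((b:ℤ) : ZMod Q) ((c:ℤ) : ZMod Q) ((d:ℤ) : ZMod Q)
        ((t:ℤ) : ZMod Q) ((v:ℤ) : ZMod Q) h1 h2
      rw [hkm]
      push_cast [hs, hu, hb']
      ring_nf
      simp only [mul_assoc]
    have hkey : (SLMOD(Q)) g = (SLMOD(Q)) w := Subtype.coe_injective hmat
    rw [hkey]
    simp
  · rw [hw]
    group

/-! ### Index-two helpers -/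

lemma sq_mem_H {H : Subgroup SL2Z} {N : ℕ}
    (hidx : H.relIndex (Gamma N) = 2) {x : SL2Z} (hx : x ∈ Gamma N) : x ^ 2 ∈ H := by
  have h2 : (H.subgroupOf (Gamma N)).index = 2 := hidx
  have := Subgroup.sq_mem_of_index_two h2 ⟨x, hx⟩
  rw [Subgroup.mem_subgroupOf] at this
  simpa using this

lemma odd_pow_mem_H {H : Subgroup SL2Z} {N : ℕ}
    (hidx : H.relIndex (Gamma N) = 2) {x : SL2Z} (hx : x ∈ Gamma N)
    {k : ℕ} (hodd : Odd k) (hxk : x ^ k ∈ H) : x ∈ H := by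
  have h2 : (H.subgroupOf (Gamma N)).index = 2 := hidx
  obtain ⟨m, hm⟩ := hodd
  set x' : Gamma N := ⟨x, hx⟩ with hx'
  have hxk' : (x' ^ 2) ^ m * x' ∈ H.subgroupOf (Gamma N) := by
    rw [Subgroup.mem_subgroupOf]
    have hcast : (((x' ^ 2) ^ m * x' : Gamma N) : SL2Z) = (x ^ k : SL2Z) := by
      push_cast
      rw [← pow_mul, ← pow_succ, hm]
    rw [hcast]
    exact hxk
  have hsq : (x' ^ 2) ^ m ∈ H.subgroupOf (Gamma N) :=
    Subgroup.pow_mem _ (Subgroup.sq_mem_of_index_two h2 x') m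
  have := (Subgroup.mul_mem_iff_of_index_two h2).1 hxk'
  rw [Subgroup.mem_subgroupOf] at *
  exact Subgroup.mem_subgroupOf.1 (this.1 (by simpa using hsq))

/-! ### Monotonicity of `Γ` -/

lemma Gamma_le_of_dvd {A B : ℕ} (h : A ∣ B) : Gamma B ≤ Gamma A := by
  intro x hx
  rw [Gamma_mem] at hx ⊢
  have key0 : ∀ z : ℤ, (z : ZMod B) = 0 → (z : ZMod A) = 0 := by
    intro z hz
    rw [ZMod.intCast_zmod_eq_zero_iff_dvd] at hz ⊢
    exact dvd_trans (Int.natCast_dvd_natCast.2 h) hz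
  have key1 : ∀ z : ℤ, (z : ZMod B) = 1 → (z : ZMod A) = 1 := by
    intro z hz
    have hz0 : ((z - 1 : ℤ) : ZMod B) = 0 := by push_cast [hz]; ring
    have := key0 _ hz0
    push_cast at this
    linear_combination this
  exact ⟨key1 _ hx.1, key0 _ hx.2.1, key0 _ hx.2.2.1, key1 _ hx.2.2.2⟩

/-! ### The forward direction -/

lemma forward (N : ℕ) (hN : 0 < N)
    (H : Subgroup SL2Z) (hle : H ≤ Gamma N)
    (hidx : H.relIndex (Gamma N) = 2) (hne : H ≠ Gamma N)
    (L : ℕ) (hL : 0 < L) (hLH : Gamma L ≤ H) : 2 * N ∣ L := by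
  have hNL : N ∣ L := by
    have h1 : E12 (L : ℤ) ∈ Gamma L := E12_mem_Gamma dvd_rfl
    have h2 : E12 (L : ℤ) ∈ Gamma N := hle (hLH h1)
    rw [Gamma_mem] at h2
    have h3 : (((L:ℤ)) : ZMod N) = 0 := by
      have := h2.2.1
      simpa [E12] using this
    exact_mod_cast (ZMod.intCast_zmod_eq_zero_iff_dvd _ N).1 h3
  obtain ⟨k, hkL⟩ := hNL
  by_contra h2NL
  have hkodd : Odd k := by
    have h2k : ¬ 2 ∣ k := by
      intro ⟨j, hj⟩
      exact h2NL ⟨j, by rw [hkL, hj]; ring⟩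
    exact ⟨k / 2, by omega⟩
  -- show Γ(N) ≤ H, contradicting H ≠ Γ(N)
  have hgoal : Gamma N ≤ H := by
    intro g hg
    obtain ⟨m₁, m₂, m₃, m₄, m₅, m₆, γ, d₁, d₂, d₃, d₄, d₅, d₆, hγ, hfac⟩ :=
      master (P := N) (Q := L) hL.ne' hg
    have hLdvd : ∀ m : ℤ, (N:ℤ) ∣ m → (L:ℤ) ∣ (k : ℤ) * m := by
      intro m ⟨j, hj⟩
      exact ⟨j, by rw [hj, hkL]; push_cast; ring⟩
    have hE12H : ∀ m : ℤ, (N:ℤ) ∣ m → E12 m ∈ H := by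
      intro m hm
      refine odd_pow_mem_H hidx (E12_mem_Gamma hm) hkodd ?_
      rw [E12_pow]
      exact hLH (E12_mem_Gamma (hLdvd m hm))
    have hE21H : ∀ m : ℤ, (N:ℤ) ∣ m → E21 m ∈ H := by
      intro m hm
      refine odd_pow_mem_H hidx (E21_mem_Gamma hm) hkodd ?_
      rw [E21_pow]
      exact hLH (E21_mem_Gamma (hLdvd m hm))
    have hECH : ∀ m : ℤ, (N:ℤ) ∣ m → EC m ∈ H := by
      intro m hm
      refine odd_pow_mem_H hidx (EC_mem_Gamma hm) hkodd ?_
      rw [EC_pow]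
      exact hLH (EC_mem_Gamma (hLdvd m hm))
    rw [hfac]
    exact H.mul_mem (hE12H _ d₁) (H.mul_mem (hE21H _ d₂) (H.mul_mem (hE12H _ d₃)
      (H.mul_mem (hECH _ d₄) (H.mul_mem (hE21H _ d₅) (H.mul_mem (hE12H _ d₆) (hLH hγ))))))
  exact hne (le_antisymm hle hgoal)

end GammaTwoAux

open GammaTwoAux in
/-- The `p = 2` case of the main theorem: if `N ∣ M`, `Γ(M) ≤ H ≤ Γ(N)`,
`[Γ(N) : H] = 2` and `H ≠ Γ(N)`, then for every positive `L`,
`Γ(L) ≤ H ↔ 2 * N ∣ L`. -/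
theorem Gamma_le_iff_dvd_of_relindex_two (N M : ℕ) (hN : 0 < N) (hM : 0 < M) (hNM : N ∣ M)
    (H : Subgroup (Matrix.SpecialLinearGroup (Fin 2) ℤ))
    (hMH : CongruenceSubgroup.Gamma M ≤ H) (hle : H ≤ CongruenceSubgroup.Gamma N)
    (hidx : H.relIndex (CongruenceSubgroup.Gamma N) = 2)
    (hne : H ≠ CongruenceSubgroup.Gamma N) :
    ∀ L : ℕ, 0 < L → (CongruenceSubgroup.Gamma L ≤ H ↔ 2 * N ∣ L) := by
  intro L hL
  constructor
  · exact forward N hN H hle hidx hne L hL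
  · intro h2NL
    -- First, 2N ∣ M by the forward direction applied to M.
    have h2NM : 2 * N ∣ M := forward N hN H hle hidx hne M hM hMH
    -- It suffices to show Γ(2N) ≤ H.
    have hmain : Gamma (2 * N) ≤ H := by
      intro g hg
      obtain ⟨m₁, m₂, m₃, m₄, m₅, m₆, γ, d₁, d₂, d₃, d₄, d₅, d₆, hγ, hfac⟩ :=
        master (P := 2 * N) (Q := M) hM.ne' hg
      have half : ∀ m : ℤ, ((2 * N : ℕ):ℤ) ∣ m → ∃ m' : ℤ, (N:ℤ) ∣ m' ∧ m = 2 * m' := by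
        intro m ⟨j, hj⟩
        exact ⟨(N:ℤ) * j, Dvd.intro j rfl, by rw [hj]; push_cast; ring⟩
      have hE12H : ∀ m : ℤ, ((2 * N : ℕ):ℤ) ∣ m → E12 m ∈ H := by
        intro m hm
        obtain ⟨m', hm', hmm⟩ := half m hm
        have : E12 m = (E12 m') ^ 2 := by rw [E12_pow]; rw [hmm]; norm_num
        rw [this]
        exact sq_mem_H hidx (E12_mem_Gamma hm')
      have hE21H : ∀ m : ℤ, ((2 * N : ℕ):ℤ) ∣ m → E21 m ∈ H := by
        intro m hm
        obtain ⟨m', hm', hmm⟩ := half m hm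
        have : E21 m = (E21 m') ^ 2 := by rw [E21_pow]; rw [hmm]; norm_num
        rw [this]
        exact sq_mem_H hidx (E21_mem_Gamma hm')
      have hECH : ∀ m : ℤ, ((2 * N : ℕ):ℤ) ∣ m → EC m ∈ H := by
        intro m hm
        obtain ⟨m', hm', hmm⟩ := half m hm
        have : EC m = (EC m') ^ 2 := by rw [EC_pow]; rw [hmm]; norm_num
        rw [this]
        exact sq_mem_H hidx (EC_mem_Gamma hm')
      rw [hfac]
      exact H.mul_mem (hE12H _ d₁) (H.mul_mem (hE21H _ d₂) (H.mul_mem (hE12H _ d₃)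
        (H.mul_mem (hECH _ d₄) (H.mul_mem (hE21H _ d₅) (H.mul_mem (hE12H _ d₆) (hMH hγ))))))
    exact (Gamma_le_of_dvd h2NL).trans hmain
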